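/- arXiv:1404.5566 — 6 statements merged into one kernel-verified Lean document; each statement's English description precedes it below -/
import Mathlib

section
/- Let P be a finite set of points in ℝ² whose points have pairwise distinct x-coordinates and pairwise distinct y-coordinates, and let G_P be the graph on vertex set P in which two distinct points are adjacent if and only if they are x-consecutive or y-consecutive in P. Then a subset H ⊆ P is a hitting set for all axis-parallel slabs induced by pairs of distinct points of P (i.e., every such slab contains a point of H) if and only if H is a vertex cover of G_P. -/
/-- Membership of a point `r` in the vertical axis-parallel slab induced by `p` and `q`,
i.e. `[min p₁ q₁, max p₁ q₁] × ℝ`. -/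
def InVSlab (p q r : ℝ × ℝ) : Prop :=
  min p.1 q.1 ≤ r.1 ∧ r.1 ≤ max p.1 q.1

/-- Membership of a point `r` in the horizontal axis-parallel slab induced by `p` and `q`,
i.e. `ℝ × [min p₂ q₂, max p₂ q₂]`. -/
def InHSlab (p q r : ℝ × ℝ) : Prop :=
  min p.2 q.2 ≤ r.2 ∧ r.2 ≤ max p.2 q.2

/-- `p` and `q` are x-consecutive in `P`. -/
def XConsecutive (P : Finset (ℝ × ℝ)) (p q : ℝ × ℝ) : Prop :=
  ∀ r ∈ P, ¬ (min p.1 q.1 < r.1 ∧ r.1 < max p.1 q.1)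

/-- `p` and `q` are y-consecutive in `P`. -/
def YConsecutive (P : Finset (ℝ × ℝ)) (p q : ℝ × ℝ) : Prop :=
  ∀ r ∈ P, ¬ (min p.2 q.2 < r.2 ∧ r.2 < max p.2 q.2)

/-- The graph `G_P` on the point set `P`: two distinct points of `P` are adjacent iff
they are x-consecutive or y-consecutive in `P`. -/
def slabGraph (P : Finset (ℝ × ℝ)) : SimpleGraph (ℝ × ℝ) where
  Adj p q := p ≠ q ∧ p ∈ P ∧ q ∈ P ∧ (XConsecutive P p q ∨ YConsecutive P p q)
  symm := by
    constructor
    rintro p q ⟨hne, hp, hq, h⟩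
    refine ⟨hne.symm, hq, hp, ?_⟩
    rcases h with h | h
    · left
      intro r hr
      rw [min_comm q.1 p.1, max_comm q.1 p.1]
      exact h r hr
    · right
      intro r hr
      rw [min_comm q.2 p.2, max_comm q.2 p.2]
      exact h r hr
  loopless := by
    constructor
    rintro p ⟨hne, -⟩
    exact hne rfl


lemma slab_aux_exists (P : Finset (ℝ × ℝ)) (f : ℝ × ℝ → ℝ) {p q : ℝ × ℝ}
    (hp : p ∈ P) (hq : q ∈ P) (hlt : f p < f q) :
    ∃ a ∈ P, ∃ b ∈ P, a ≠ b ∧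
      (∀ r ∈ P, ¬ (min (f a) (f b) < f r ∧ f r < max (f a) (f b))) ∧
      f p ≤ f a ∧ f a ≤ f q ∧ f p ≤ f b ∧ f b ≤ f q := by
  classical
  set S := P.filter (fun r => f p < f r ∧ f r ≤ f q) with hS
  have hqS : q ∈ S := by simp [hS, hq, hlt]
  obtain ⟨b, hbS, hbmin⟩ := S.exists_min_image f ⟨q, hqS⟩
  simp only [hS, Finset.mem_filter] at hbS
  obtain ⟨hbP, hpb, hbq⟩ := hbS
  refine ⟨p, hp, b, hbP, ?_, ?_, le_refl _, hlt.le, hpb.le, hbq⟩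
  · rintro rfl; exact lt_irrefl _ hpb
  · rintro r hr ⟨h1, h2⟩
    rw [min_eq_left hpb.le] at h1
    rw [max_eq_right hpb.le] at h2
    have hrS : r ∈ S := by
      simp only [hS, Finset.mem_filter]
      exact ⟨hr, h1, h2.le.trans hbq⟩
    exact absurd (hbmin r hrS) (not_le.mpr h2)

lemma slab_aux_hit (P H : Finset (ℝ × ℝ)) (f : ℝ × ℝ → ℝ)
    (vc : ∀ a ∈ P, ∀ b ∈ P, a ≠ b →
      (∀ r ∈ P, ¬ (min (f a) (f b) < f r ∧ f r < max (f a) (f b))) → a ∈ H ∨ b ∈ H)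
    {p q : ℝ × ℝ} (hp : p ∈ P) (hq : q ∈ P) (hne : f p ≠ f q) :
    ∃ r ∈ H, min (f p) (f q) ≤ f r ∧ f r ≤ max (f p) (f q) := by
  rcases hne.lt_or_gt with hlt | hlt
  · obtain ⟨a, ha, b, hb, hab, hcons, h1, h2, h3, h4⟩ := slab_aux_exists P f hp hq hlt
    rw [min_eq_left hlt.le, max_eq_right hlt.le]
    rcases vc a ha b hb hab hcons with h | h
    · exact ⟨a, h, h1, h2⟩
    · exact ⟨b, h, h3, h4⟩
  · obtain ⟨a, ha, b, hb, hab, hcons, h1, h2, h3, h4⟩ := slab_aux_exists P f hq hp hlt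
    rw [min_eq_right hlt.le, max_eq_left hlt.le]
    rcases vc a ha b hb hab hcons with h | h
    · exact ⟨a, h, h1, h2⟩
    · exact ⟨b, h, h3, h4⟩

lemma slab_aux_cover (P H : Finset (ℝ × ℝ)) (hH : H ⊆ P) (f : ℝ × ℝ → ℝ)
    (hinj : ∀ p ∈ P, ∀ q ∈ P, p ≠ q → f p ≠ f q)
    {p q : ℝ × ℝ} (hp : p ∈ P) (hq : q ∈ P)
    (hcons : ∀ r ∈ P, ¬ (min (f p) (f q) < f r ∧ f r < max (f p) (f q)))
    (hhit : ∃ r ∈ H, min (f p) (f q) ≤ f r ∧ f r ≤ max (f p) (f q)) :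
    p ∈ H ∨ q ∈ H := by
  obtain ⟨r, hrH, h1, h2⟩ := hhit
  have hrP := hH hrH
  have hno := hcons r hrP
  have heq : f r = min (f p) (f q) ∨ f r = max (f p) (f q) := by
    rcases not_and_or.mp hno with h | h
    · exact Or.inl (le_antisymm (not_lt.mp h) h1)
    · exact Or.inr (le_antisymm h2 (not_lt.mp h))
  have heq2 : f r = f p ∨ f r = f q := by
    rcases heq with h | h
    · rcases min_choice (f p) (f q) with hm | hm
      · exact Or.inl (h.trans hm)
      · exact Or.inr (h.trans hm)
    · rcases max_choice (f p) (f q) with hm | hm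
      · exact Or.inl (h.trans hm)
      · exact Or.inr (h.trans hm)
  rcases heq2 with h | h
  · have : r = p := by
      by_contra hne
      exact hinj r hrP p hp hne h
    exact Or.inl (this ▸ hrH)
  · have : r = q := by
      by_contra hne
      exact hinj r hrP q hq hne h
    exact Or.inr (this ▸ hrH)

/-- A subset `H ⊆ P` hits all axis-parallel slabs induced by pairs of distinct points of `P`
iff it is a vertex cover of the graph `G_P`. -/
theorem hitting_set_iff_vertex_cover (P : Finset (ℝ × ℝ))
    (hx : ∀ p ∈ P, ∀ q ∈ P, p ≠ q → p.1 ≠ q.1)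
    (hy : ∀ p ∈ P, ∀ q ∈ P, p ≠ q → p.2 ≠ q.2)
    (H : Finset (ℝ × ℝ)) (hH : H ⊆ P) :
    (∀ p ∈ P, ∀ q ∈ P, p ≠ q →
        (∃ r ∈ H, InVSlab p q r) ∧ (∃ r ∈ H, InHSlab p q r)) ↔
      (∀ ⦃p q : ℝ × ℝ⦄, (slabGraph P).Adj p q → p ∈ H ∨ q ∈ H) := by
  constructor
  · rintro h p q ⟨hne, hp, hq, hcons⟩
    rcases hcons with hc | hc
    · exact slab_aux_cover P H hH Prod.fst hx hp hq hc ((h p hp q hq hne).1)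
    · exact slab_aux_cover P H hH Prod.snd hy hp hq hc ((h p hp q hq hne).2)
  · intro vc p hp q hq hne
    constructor
    · exact slab_aux_hit P H Prod.fst
        (fun a ha b hb hab hc => vc ⟨hab, ha, hb, Or.inl hc⟩) hp hq (hx p hp q hq hne)
    · exact slab_aux_hit P H Prod.snd
        (fun a ha b hb hab hc => vc ⟨hab, ha, hb, Or.inr hc⟩) hp hq (hy p hp q hq hne)
end

section
/- Let n ≥ 1 and let σ, τ be permutations of {1,…,n}. Define the point p_i := (σ⁻¹(i), τ⁻¹(i)) ∈ ℝ² for each i ∈ {1,…,n}, and let P := {p_1,…,p_n}. Then for every subset S ⊆ {1,…,n}: S is a vertex cover of the braid graph of σ and τ if and only if {p_i : i ∈ S} is a hitting set for all axis-parallel slabs induced by pairs of distinct points of P. In particular, for every k, the braid graph of σ and τ has a vertex cover of size at most k if and only if P admits a hitting set of size at most k for its induced axis-parallel slabs. -/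
/-- `H` is a hitting set for all the axis-parallel slabs induced by pairs of distinct
points of `P`: `H ⊆ P` and for every pair of distinct points of `P`, both induced slabs
contain a point of `H`. -/
def IsHittingSet (P H : Finset (ℝ × ℝ)) : Prop :=
  H ⊆ P ∧ ∀ p ∈ P, ∀ q ∈ P, p ≠ q →
    (∃ r ∈ H, InVSlab p q r) ∧ (∃ r ∈ H, InHSlab p q r)

/-- `S` is a vertex cover of `G`: every edge of `G` has an endpoint in `S`. -/
def IsVertexCover {V : Type*} (G : SimpleGraph V) (S : Finset V) : Prop :=
  ∀ ⦃u v : V⦄, G.Adj u v → u ∈ S ∨ v ∈ S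

/-- The braid graph of two permutations `σ, τ` of `Fin n`: its edge set is the union of
the two Hamiltonian paths `σ(0)σ(1)…σ(n-1)` and `τ(0)τ(1)…τ(n-1)`. -/
def braidGraph (n : ℕ) (σ τ : Equiv.Perm (Fin n)) : SimpleGraph (Fin n) where
  Adj i j := i ≠ j ∧ ∃ a b : Fin n, (b : ℕ) = (a : ℕ) + 1 ∧
      ((σ a = i ∧ σ b = j) ∨ (σ a = j ∧ σ b = i) ∨
        (τ a = i ∧ τ b = j) ∨ (τ a = j ∧ τ b = i))
  symm := by
    constructor
    rintro i j ⟨hne, a, b, hab, h⟩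
    exact ⟨hne.symm, a, b, hab, by tauto⟩
  loopless := by
    constructor
    rintro i ⟨hne, -⟩
    exact hne rfl

/-- The point `p_i := (σ⁻¹(i), τ⁻¹(i)) ∈ ℝ²` associated to the vertex `i` of the
braid graph of `σ` and `τ`. -/
noncomputable def braidPoint (n : ℕ) (σ τ : Equiv.Perm (Fin n)) (i : Fin n) : ℝ × ℝ :=
  (((σ.symm i : Fin n) : ℕ), ((τ.symm i : Fin n) : ℕ))


lemma braidPoint_injective (n : ℕ) (σ τ : Equiv.Perm (Fin n)) :
    Function.Injective (braidPoint n σ τ) := by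
  intro i j h
  have h1 : (((σ.symm i : Fin n) : ℕ) : ℝ) = (((σ.symm j : Fin n) : ℕ) : ℝ) :=
    congrArg Prod.fst h
  have h2 : σ.symm i = σ.symm j := Fin.ext (Nat.cast_injective h1)
  exact σ.symm.injective h2

lemma slab_hit_aux (n : ℕ) (π : Equiv.Perm (Fin n)) (S : Finset (Fin n))
    (hS : ∀ a b : Fin n, (b : ℕ) = (a : ℕ) + 1 → π a ∈ S ∨ π b ∈ S)
    (i j : Fin n) (hij : i ≠ j) :
    ∃ m ∈ S, min ((π.symm i : Fin n) : ℕ) ((π.symm j : Fin n) : ℕ) ≤ ((π.symm m : Fin n) : ℕ) ∧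
      ((π.symm m : Fin n) : ℕ) ≤ max ((π.symm i : Fin n) : ℕ) ((π.symm j : Fin n) : ℕ) := by
  wlog h : ((π.symm i : Fin n) : ℕ) < ((π.symm j : Fin n) : ℕ) generalizing i j
  · have hne : ((π.symm i : Fin n) : ℕ) ≠ ((π.symm j : Fin n) : ℕ) := by
      intro he
      exact hij (π.symm.injective (Fin.ext he))
    obtain ⟨m, hm, h1, h2⟩ := this j i hij.symm (by omega)
    exact ⟨m, hm, by omega, by omega⟩
  have ha1 : ((π.symm i : Fin n) : ℕ) + 1 < n :=
    lt_of_le_of_lt (Nat.succ_le_of_lt h) (π.symm j).isLt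
  set a : Fin n := π.symm i with ha
  set b : Fin n := ⟨(a : ℕ) + 1, ha1⟩ with hb
  rcases hS a b rfl with hm | hm
  · refine ⟨π a, hm, ?_, ?_⟩ <;> simp [Equiv.symm_apply_apply] <;> omega
  · refine ⟨π b, hm, ?_, ?_⟩ <;> simp [Equiv.symm_apply_apply, hb] <;> omega

lemma cover_of_hit_aux (n : ℕ) (π : Equiv.Perm (Fin n)) (S : Finset (Fin n))
    (a b : Fin n) (hab : (b : ℕ) = (a : ℕ) + 1)
    (m : Fin n) (hm : m ∈ S)
    (h1 : min ((π.symm (π a) : Fin n) : ℕ) ((π.symm (π b) : Fin n) : ℕ) ≤ ((π.symm m : Fin n) : ℕ))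
    (h2 : ((π.symm m : Fin n) : ℕ) ≤ max ((π.symm (π a) : Fin n) : ℕ) ((π.symm (π b) : Fin n) : ℕ)) :
    π a ∈ S ∨ π b ∈ S := by
  simp only [Equiv.symm_apply_apply] at h1 h2
  have : ((π.symm m : Fin n) : ℕ) = (a : ℕ) ∨ ((π.symm m : Fin n) : ℕ) = (b : ℕ) := by omega
  rcases this with h | h
  · left
    have : π.symm m = a := Fin.ext h
    rw [← this, Equiv.apply_symm_apply]; exact hm
  · right
    have : π.symm m = b := Fin.ext h
    rw [← this, Equiv.apply_symm_apply]; exact hm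

/-- Vertex Cover on the braid graph of `σ` and `τ` reduces to hitting all axis-parallel
slabs induced by the point set `P = {p_i : i}` with `p_i = (σ⁻¹(i), τ⁻¹(i))`: a set
`S` of vertices is a vertex cover iff `{p_i : i ∈ S}` is a hitting set for the induced
slabs of `P`; in particular, there is a vertex cover of size at most `k` iff there is a
hitting set of size at most `k`. -/
theorem braid_vertexCover_iff_slab_hittingSet (n : ℕ) (hn : 1 ≤ n)
    (σ τ : Equiv.Perm (Fin n)) :
    (∀ S : Finset (Fin n),
        IsVertexCover (braidGraph n σ τ) S ↔
          IsHittingSet (Finset.univ.image (braidPoint n σ τ))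
            (S.image (braidPoint n σ τ)))
    ∧ ∀ k : ℕ,
        (∃ S : Finset (Fin n), IsVertexCover (braidGraph n σ τ) S ∧ S.card ≤ k) ↔
        (∃ H : Finset (ℝ × ℝ),
          IsHittingSet (Finset.univ.image (braidPoint n σ τ)) H ∧ H.card ≤ k) := by
  have hinj := braidPoint_injective n σ τ
  have main : ∀ S : Finset (Fin n),
      IsVertexCover (braidGraph n σ τ) S ↔
        IsHittingSet (Finset.univ.image (braidPoint n σ τ)) (S.image (braidPoint n σ τ)) := by
    intro S
    constructor
    · intro hcov
      refine ⟨Finset.image_subset_image (Finset.subset_univ S), ?_⟩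
      intro p hp q hq hpq
      obtain ⟨i, -, rfl⟩ := Finset.mem_image.mp hp
      obtain ⟨j, -, rfl⟩ := Finset.mem_image.mp hq
      have hij : i ≠ j := fun h => hpq (by rw [h])
      constructor
      · have hS : ∀ a b : Fin n, (b : ℕ) = (a : ℕ) + 1 → σ a ∈ S ∨ σ b ∈ S := by
          intro a b hab
          refine hcov ?_
          refine ⟨fun h => ?_, a, b, hab, Or.inl ⟨rfl, rfl⟩⟩
          have := σ.injective h
          omega
        obtain ⟨m, hm, h1, h2⟩ := slab_hit_aux n σ S hS i j hij
        refine ⟨braidPoint n σ τ m, Finset.mem_image_of_mem _ hm, ?_, ?_⟩ <;>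
          simp only [braidPoint] <;> push_cast <;> [exact_mod_cast h1; exact_mod_cast h2]
      · have hS : ∀ a b : Fin n, (b : ℕ) = (a : ℕ) + 1 → τ a ∈ S ∨ τ b ∈ S := by
          intro a b hab
          refine hcov ?_
          refine ⟨fun h => ?_, a, b, hab, Or.inr (Or.inr (Or.inl ⟨rfl, rfl⟩))⟩
          have := τ.injective h
          omega
        obtain ⟨m, hm, h1, h2⟩ := slab_hit_aux n τ S hS i j hij
        refine ⟨braidPoint n σ τ m, Finset.mem_image_of_mem _ hm, ?_, ?_⟩ <;>
          simp only [braidPoint] <;> push_cast <;> [exact_mod_cast h1; exact_mod_cast h2]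
    · rintro ⟨hsub, hhit⟩ u v ⟨hne, a, b, hab, hcase⟩
      have hmem : ∀ i : Fin n, braidPoint n σ τ i ∈ Finset.univ.image (braidPoint n σ τ) :=
        fun i => Finset.mem_image_of_mem _ (Finset.mem_univ i)
      have hpq : braidPoint n σ τ u ≠ braidPoint n σ τ v := fun h => hne (hinj h)
      obtain ⟨hV, hH⟩ := hhit _ (hmem u) _ (hmem v) hpq
      rcases hcase with ⟨h1, h2⟩ | ⟨h1, h2⟩ | ⟨h1, h2⟩ | ⟨h1, h2⟩
      · subst h1; subst h2
        obtain ⟨r, hr, hslab⟩ := hV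
        obtain ⟨m, hmS, rfl⟩ := Finset.mem_image.mp hr
        refine cover_of_hit_aux n σ S a b hab m hmS ?_ ?_ <;>
          · have h1 := hslab.1
            have h2 := hslab.2
            simp only [InVSlab, braidPoint] at h1 h2
            push_cast at h1 h2
            first | exact_mod_cast h1 | exact_mod_cast h2
      · subst h1; subst h2
        obtain ⟨r, hr, hslab⟩ := hV
        obtain ⟨m, hmS, rfl⟩ := Finset.mem_image.mp hr
        have := cover_of_hit_aux n σ S a b hab m hmS ?_ ?_
        · tauto
        · have h1 := hslab.1
          simp only [InVSlab, braidPoint] at h1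
          push_cast at h1
          rw [min_comm] at h1
          exact_mod_cast h1
        · have h2 := hslab.2
          simp only [InVSlab, braidPoint] at h2
          push_cast at h2
          rw [max_comm] at h2
          exact_mod_cast h2
      · subst h1; subst h2
        obtain ⟨r, hr, hslab⟩ := hH
        obtain ⟨m, hmS, rfl⟩ := Finset.mem_image.mp hr
        refine cover_of_hit_aux n τ S a b hab m hmS ?_ ?_ <;>
          · have h1 := hslab.1
            have h2 := hslab.2
            simp only [InHSlab, braidPoint] at h1 h2
            push_cast at h1 h2
            first | exact_mod_cast h1 | exact_mod_cast h2
      · subst h1; subst h2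
        obtain ⟨r, hr, hslab⟩ := hH
        obtain ⟨m, hmS, rfl⟩ := Finset.mem_image.mp hr
        have := cover_of_hit_aux n τ S a b hab m hmS ?_ ?_
        · tauto
        · have h1 := hslab.1
          simp only [InHSlab, braidPoint] at h1
          push_cast at h1
          rw [min_comm] at h1
          exact_mod_cast h1
        · have h2 := hslab.2
          simp only [InHSlab, braidPoint] at h2
          push_cast at h2
          rw [max_comm] at h2
          exact_mod_cast h2
  refine ⟨main, fun k => ⟨?_, ?_⟩⟩
  · rintro ⟨S, hS, hcard⟩
    exact ⟨S.image (braidPoint n σ τ), (main S).mp hS,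
      le_trans (Finset.card_image_le) hcard⟩
  · rintro ⟨H, hH, hcard⟩
    set S : Finset (Fin n) := Finset.univ.filter (fun i => braidPoint n σ τ i ∈ H) with hSdef
    have himg : S.image (braidPoint n σ τ) = H := by
      apply Finset.Subset.antisymm
      · intro r hr
        obtain ⟨i, hi, rfl⟩ := Finset.mem_image.mp hr
        exact (Finset.mem_filter.mp hi).2
      · intro r hr
        obtain ⟨i, -, rfl⟩ := Finset.mem_image.mp (hH.1 hr)
        exact Finset.mem_image_of_mem _ (Finset.mem_filter.mpr ⟨Finset.mem_univ i, hr⟩)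
    refine ⟨S, (main S).mpr (by rw [himg]; exact hH), ?_⟩
    have : S.card = H.card := by
      rw [← himg, Finset.card_image_of_injective _ hinj]
    omega
end

section
/- Let G be a finite simple graph and let M = {(x_1,x′_1),…,(x_m,x′_m)} be a perfect matching of G. Let Ĝ be the graph obtained from G as follows: for each i ∈ {1,…,m}, delete the edge (x_i, x′_i), add six new vertices s_i, a_i, b_i, a′_i, b′_i, t_i carrying the edges {a_ib_i, a_ia′_i, a_ib′_i, b_ib′_i, b_ia′_i, a′_ib′_i, s_ia_i, s_ib′_i, s_it_i, t_ib_i, t_ia′_i}, and add the edges (x_i, s_i) and (t_i, x′_i); the six-vertex sets for different i are disjoint. Then for every natural number p, G has a vertex cover of size at most p if and only if Ĝ has a vertex cover of size at most p + 4m. -/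
/-- The six labels of the gadget `J` replacing a matching edge. -/
inductive JL : Type
  | s | a | b | a' | b' | t
  deriving DecidableEq

/-- The internal edge list of the gadget `J`: a clique on `{a, b, a', b'}` together with
the edges `sa, sb', st, tb, ta'`. -/
def gadEdges : List (JL × JL) :=
  [(JL.a, JL.b), (JL.a, JL.a'), (JL.a, JL.b'), (JL.b, JL.b'), (JL.b, JL.a'),
    (JL.a', JL.b'), (JL.s, JL.a), (JL.s, JL.b'), (JL.s, JL.t), (JL.t, JL.b),
    (JL.t, JL.a')]

/-- Internal adjacency of the gadget `J`. -/
def GadAdj (l l' : JL) : Prop := (l, l') ∈ gadEdges ∨ (l', l) ∈ gadEdges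

/-- The graph `Ĝ` obtained from `G` and a family `e : Fin m → V × V` of matching edges:
each edge `(x_i, x'_i) = e i` is deleted and replaced by a fresh copy of the gadget `J`
on the six vertices `(i, s), (i, a), (i, b), (i, a'), (i, b'), (i, t)`, with the
attachment edges `(x_i, s_i)` and `(t_i, x'_i)`. -/
def hatGraph {V : Type*} (G : SimpleGraph V) {m : ℕ} (e : Fin m → V × V) :
    SimpleGraph (V ⊕ (Fin m × JL)) where
  Adj u v :=
    match u, v with
    | Sum.inl a, Sum.inl b =>
        G.Adj a b ∧ ∀ i, ¬((a = (e i).1 ∧ b = (e i).2) ∨ (a = (e i).2 ∧ b = (e i).1))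
    | Sum.inl a, Sum.inr (i, l) => (a = (e i).1 ∧ l = JL.s) ∨ (a = (e i).2 ∧ l = JL.t)
    | Sum.inr (i, l), Sum.inl a => (a = (e i).1 ∧ l = JL.s) ∨ (a = (e i).2 ∧ l = JL.t)
    | Sum.inr (i, l), Sum.inr (j, l') => i = j ∧ GadAdj l l'
  symm := by
    constructor
    rintro (a | ⟨i, l⟩) (b | ⟨j, l'⟩) h
    · exact ⟨h.1.symm, fun i hc => h.2 i (by tauto)⟩
    · exact h
    · exact h
    · obtain ⟨rfl, h2⟩ := h
      exact ⟨rfl, h2.symm⟩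
  loopless := by
    constructor
    rintro (a | ⟨i, l⟩) h
    · exact G.loopless.irrefl a h.1
    · cases l <;> exact absurd h.2 (by simp [GadAdj, gadEdges])

instance : Fintype JL :=
  ⟨⟨[JL.s, JL.a, JL.b, JL.a', JL.b', JL.t], by decide⟩, by intro x; cases x <;> decide⟩

instance (l l' : JL) : Decidable (GadAdj l l') :=
  inferInstanceAs (Decidable ((l, l') ∈ gadEdges ∨ (l', l) ∈ gadEdges))

def tside : Finset JL := {JL.a, JL.b, JL.b', JL.t}
def sside : Finset JL := {JL.s, JL.a, JL.b, JL.a'}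

lemma tside_cover : ∀ l l', GadAdj l l' → l ∈ tside ∨ l' ∈ tside := by decide
lemma sside_cover : ∀ l l', GadAdj l l' → l ∈ sside ∨ l' ∈ sside := by decide

lemma gad_card4 : ∀ L : Finset JL, (∀ l l', GadAdj l l' → l ∈ L ∨ l' ∈ L) → 4 ≤ L.card := by
  decide

lemma gad_card5 : ∀ L : Finset JL, (∀ l l', GadAdj l l' → l ∈ L ∨ l' ∈ L) →
    JL.s ∈ L → JL.t ∈ L → 5 ≤ L.card := by decide

/-- If `e` enumerates a perfect matching `M` of `G` (with `m` edges), then `G` has a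
vertex cover of size at most `p` iff the graph `Ĝ`, obtained by replacing every matching
edge with a copy of the gadget `J`, has a vertex cover of size at most `p + 4m`. -/
theorem hatGraph_vertexCover_iff {V : Type*} [Fintype V] [DecidableEq V]
    (G : SimpleGraph V) (m : ℕ) (e : Fin m → V × V)
    (hadj : ∀ i, G.Adj (e i).1 (e i).2)
    (hdisj : ∀ i j, i ≠ j →
      ({(e i).1, (e i).2} : Finset V) ∩ {(e j).1, (e j).2} = ∅)
    (hcover : ∀ v : V, ∃ i, v = (e i).1 ∨ v = (e i).2)
    (p : ℕ) :
    (∃ S : Finset V, IsVertexCover G S ∧ S.card ≤ p) ↔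
      (∃ S : Finset (V ⊕ (Fin m × JL)),
        IsVertexCover (hatGraph G e) S ∧ S.card ≤ p + 4 * m) := by
  constructor
  · rintro ⟨S, hS, hcard⟩
    set F : Fin m → Finset (V ⊕ (Fin m × JL)) := fun i =>
      (if (e i).1 ∈ S then tside else sside).image (fun l => Sum.inr (i, l)) with hF
    refine ⟨S.image Sum.inl ∪ Finset.univ.biUnion F, ?_, ?_⟩
    · rintro (u | ⟨i, l⟩) (v | ⟨j, l'⟩) h
      · rcases hS h.1 with hu | hv
        · exact Or.inl (by simp [hu])
        · exact Or.inr (by simp [hv])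
      · -- edge inl u -- inr (j, l')
        by_cases h1 : (e j).1 ∈ S
        · rcases h with ⟨rfl, rfl⟩ | ⟨rfl, rfl⟩
          · exact Or.inl (by simp [h1])
          · refine Or.inr (Finset.mem_union_right _ ?_)
            refine Finset.mem_biUnion.2 ⟨j, Finset.mem_univ _, ?_⟩
            simp [hF, h1, tside]
        · rcases hS (hadj j) with h2 | h2
          · exact absurd h2 h1
          rcases h with ⟨rfl, rfl⟩ | ⟨rfl, rfl⟩
          · refine Or.inr (Finset.mem_union_right _ ?_)
            refine Finset.mem_biUnion.2 ⟨j, Finset.mem_univ _, ?_⟩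
            simp [hF, h1, sside]
          · exact Or.inl (by simp [h2])
      · -- edge inr (i, l) -- inl v  (symmetric)
        by_cases h1 : (e i).1 ∈ S
        · rcases h with ⟨rfl, rfl⟩ | ⟨rfl, rfl⟩
          · exact Or.inr (by simp [h1])
          · refine Or.inl (Finset.mem_union_right _ ?_)
            refine Finset.mem_biUnion.2 ⟨i, Finset.mem_univ _, ?_⟩
            simp [hF, h1, tside]
        · rcases hS (hadj i) with h2 | h2
          · exact absurd h2 h1
          rcases h with ⟨rfl, rfl⟩ | ⟨rfl, rfl⟩
          · refine Or.inl (Finset.mem_union_right _ ?_)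
            refine Finset.mem_biUnion.2 ⟨i, Finset.mem_univ _, ?_⟩
            simp [hF, h1, sside]
          · exact Or.inr (by simp [h2])
      · -- edge inr inr
        obtain ⟨rfl, hll⟩ := h
        by_cases h1 : (e i).1 ∈ S
        · rcases tside_cover l l' hll with hl | hl
          · refine Or.inl (Finset.mem_union_right _
              (Finset.mem_biUnion.2 ⟨i, Finset.mem_univ _, ?_⟩))
            simp [hF, h1, hl]
          · refine Or.inr (Finset.mem_union_right _
              (Finset.mem_biUnion.2 ⟨i, Finset.mem_univ _, ?_⟩))
            simp [hF, h1, hl]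
        · rcases sside_cover l l' hll with hl | hl
          · refine Or.inl (Finset.mem_union_right _
              (Finset.mem_biUnion.2 ⟨i, Finset.mem_univ _, ?_⟩))
            simp [hF, h1, hl]
          · refine Or.inr (Finset.mem_union_right _
              (Finset.mem_biUnion.2 ⟨i, Finset.mem_univ _, ?_⟩))
            simp [hF, h1, hl]
    · refine le_trans (Finset.card_union_le _ _) ?_
      have h1 : (S.image Sum.inl).card ≤ p :=
        le_trans (Finset.card_image_le (f := (Sum.inl : V → V ⊕ (Fin m × JL)))) hcard
      have h2 : (Finset.univ.biUnion F).card ≤ 4 * m := by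
        refine le_trans (Finset.card_biUnion_le) ?_
        have : ∀ i : Fin m, (F i).card ≤ 4 := by
          intro i
          refine le_trans Finset.card_image_le ?_
          split_ifs <;> decide
        calc ∑ i : Fin m, (F i).card ≤ ∑ _i : Fin m, 4 :=
              Finset.sum_le_sum fun i _ => this i
          _ = 4 * m := by simp [Finset.sum_const, mul_comm]
      omega
  · rintro ⟨T, hT, hcard⟩
    classical
    set L : Fin m → Finset JL := fun i =>
      Finset.univ.filter (fun l => (Sum.inr (i, l) : V ⊕ (Fin m × JL)) ∈ T) with hL
    set TV : Finset V := Finset.univ.filter (fun v => Sum.inl v ∈ T) with hTV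
    set bad : Finset (Fin m) :=
      Finset.univ.filter (fun i => (e i).1 ∉ TV ∧ (e i).2 ∉ TV) with hbad
    -- each L i is a cover of the gadget
    have hLcov : ∀ i, ∀ l l', GadAdj l l' → l ∈ L i ∨ l' ∈ L i := by
      intro i l l' h
      have := hT (u := Sum.inr (i, l)) (v := Sum.inr (i, l')) ⟨rfl, h⟩
      simpa [hL] using this
    have hL4 : ∀ i, 4 ≤ (L i).card := fun i => gad_card4 _ (hLcov i)
    have hL5 : ∀ i ∈ bad, 5 ≤ (L i).card := by
      intro i hi
      simp only [hbad, hTV, Finset.mem_filter, Finset.mem_univ, true_and] at hi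
      have hs : Sum.inr (i, JL.s) ∈ T := by
        rcases hT (u := Sum.inl (e i).1) (v := Sum.inr (i, JL.s)) (Or.inl ⟨rfl, rfl⟩) with h | h
        · exact absurd h hi.1
        · exact h
      have ht : Sum.inr (i, JL.t) ∈ T := by
        rcases hT (u := Sum.inl (e i).2) (v := Sum.inr (i, JL.t)) (Or.inr ⟨rfl, rfl⟩) with h | h
        · exact absurd h hi.2
        · exact h
      exact gad_card5 _ (hLcov i) (by simp [hL, hs]) (by simp [hL, ht])
    -- the cardinality decomposition of T
    have hsub : TV.image Sum.inl ∪
        Finset.univ.biUnion (fun i => (L i).image (fun l => (Sum.inr (i, l) : V ⊕ (Fin m × JL))))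
        ⊆ T := by
      intro x hx
      rcases Finset.mem_union.1 hx with hx | hx
      · obtain ⟨v, hv, rfl⟩ := Finset.mem_image.1 hx
        simpa [hTV] using hv
      · obtain ⟨i, _, hx⟩ := Finset.mem_biUnion.1 hx
        obtain ⟨l, hl, rfl⟩ := Finset.mem_image.1 hx
        simpa [hL] using hl
    have hdisj1 : Disjoint (TV.image Sum.inl)
        (Finset.univ.biUnion (fun i => (L i).image (fun l => (Sum.inr (i, l) : V ⊕ (Fin m × JL))))) := by
      rw [Finset.disjoint_left]
      intro x hx hx'
      obtain ⟨v, _, rfl⟩ := Finset.mem_image.1 hx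
      obtain ⟨i, _, hx'⟩ := Finset.mem_biUnion.1 hx'
      obtain ⟨l, _, h⟩ := Finset.mem_image.1 hx'
      exact absurd h (by simp)
    have hcardT : TV.card + ∑ i : Fin m, (L i).card ≤ T.card := by
      have h1 : (TV.image Sum.inl ∪
          Finset.univ.biUnion (fun i => (L i).image (fun l => (Sum.inr (i, l) : V ⊕ (Fin m × JL))))).card
          = TV.card + ∑ i : Fin m, (L i).card := by
        rw [Finset.card_union_of_disjoint hdisj1,
          Finset.card_image_of_injective _ Sum.inl_injective,
          Finset.card_biUnion]
        · congr 1
          refine Finset.sum_congr rfl fun i _ => ?_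
          exact Finset.card_image_of_injective _ (fun x y h => by
            simpa using h)
        · intro i _ j _ hij
          rw [Function.onFun, Finset.disjoint_left]
          intro x hx hx'
          obtain ⟨l, _, rfl⟩ := Finset.mem_image.1 hx
          obtain ⟨l', _, h⟩ := Finset.mem_image.1 hx'
          simp only [Sum.inr.injEq, Prod.mk.injEq] at h
          exact hij h.1.symm
      rw [← h1]
      exact Finset.card_le_card hsub
    have hsumL : 4 * m + bad.card ≤ ∑ i : Fin m, (L i).card := by
      have : ∑ i : Fin m, (4 + if i ∈ bad then 1 else 0) ≤ ∑ i : Fin m, (L i).card := by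
        refine Finset.sum_le_sum fun i _ => ?_
        by_cases hi : i ∈ bad
        · simpa [hi] using hL5 i hi
        · simpa [hi] using hL4 i
      calc 4 * m + bad.card = ∑ i : Fin m, (4 + if i ∈ bad then 1 else 0) := by
            rw [Finset.sum_add_distrib]
            simp [Finset.sum_ite_mem, mul_comm]
        _ ≤ _ := this
    refine ⟨TV ∪ bad.image (fun i => (e i).1), ?_, ?_⟩
    · intro u v huv
      by_cases hm : ∃ i, (u = (e i).1 ∧ v = (e i).2) ∨ (u = (e i).2 ∧ v = (e i).1)
      · obtain ⟨i, hi⟩ := hm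
        by_cases hb : i ∈ bad
        · have h1 : (e i).1 ∈ bad.image (fun i => (e i).1) :=
            Finset.mem_image.2 ⟨i, hb, rfl⟩
          rcases hi with ⟨rfl, rfl⟩ | ⟨rfl, rfl⟩
          · exact Or.inl (Finset.mem_union_right _ h1)
          · exact Or.inr (Finset.mem_union_right _ h1)
        · simp only [hbad, Finset.mem_filter, Finset.mem_univ, true_and, not_and_or,
            not_not] at hb
          rcases hi with ⟨rfl, rfl⟩ | ⟨rfl, rfl⟩
          · rcases hb with h | h
            · exact Or.inl (Finset.mem_union_left _ (by simpa using h))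
            · exact Or.inr (Finset.mem_union_left _ (by simpa using h))
          · rcases hb with h | h
            · exact Or.inr (Finset.mem_union_left _ (by simpa using h))
            · exact Or.inl (Finset.mem_union_left _ (by simpa using h))
      · push_neg at hm
        have hadj' : (hatGraph G e).Adj (Sum.inl u) (Sum.inl v) := by
          exact ⟨huv, fun i => by
            intro hc
            rcases hc with ⟨h1, h2⟩ | ⟨h1, h2⟩
            · exact (hm i).1 h1 h2
            · exact (hm i).2 h1 h2⟩
        rcases hT hadj' with h | h
        · exact Or.inl (Finset.mem_union_left _ (by simp [hTV, h]))
        · exact Or.inr (Finset.mem_union_left _ (by simp [hTV, h]))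
    · have := le_trans (Finset.card_union_le TV (bad.image (fun i => (e i).1)))
        (add_le_add le_rfl (Finset.card_image_le))
      omega
end

section
/- Let G be a finite simple graph and B a subset of its vertex set, and let t be a natural number. Suppose that (i) every vertex cover of the subgraph of G induced by B has at least t vertices, and (ii) there exists a set X ⊆ B with |X| = t such that every edge of G with at least one endpoint in B has an endpoint in X. Then for every natural number k, G has a vertex cover of size at most k + t if and only if the graph G − B obtained by deleting all vertices of B has a vertex cover of size at most k. -/
/-- Suppose (i) every vertex cover of the subgraph of `G` induced by `B` has at least
`t` vertices, and (ii) there is a set `X ⊆ B` with `|X| = t` covering every edge of `G`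
having an endpoint in `B`. Then `G` has a vertex cover of size at most `k + t` iff the
graph `G − B` (delete the vertices of `B`) has a vertex cover of size at most `k`. -/
theorem vertexCover_delete_gadget_iff {V : Type*} [Fintype V] [DecidableEq V]
    (G : SimpleGraph V) (B : Finset V) (t : ℕ)
    (hlb : ∀ S : Finset V, S ⊆ B →
      (∀ u v : V, u ∈ B → v ∈ B → G.Adj u v → u ∈ S ∨ v ∈ S) → t ≤ S.card)
    (hX : ∃ X : Finset V, X ⊆ B ∧ X.card = t ∧
      ∀ u v : V, G.Adj u v → (u ∈ B ∨ v ∈ B) → u ∈ X ∨ v ∈ X)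
    (k : ℕ) :
    (∃ S : Finset V, IsVertexCover G S ∧ S.card ≤ k + t) ↔
      (∃ S : Finset V, (∀ v ∈ S, v ∉ B) ∧
        (∀ u v : V, G.Adj u v → u ∉ B → v ∉ B → u ∈ S ∨ v ∈ S) ∧ S.card ≤ k) := by
  constructor
  · rintro ⟨S, hS, hcard⟩
    refine ⟨S \ B, fun v hv => (Finset.mem_sdiff.1 hv).2, ?_, ?_⟩
    · intro u v huv hu hv
      rcases hS huv with h | h
      · exact Or.inl (Finset.mem_sdiff.2 ⟨h, hu⟩)
      · exact Or.inr (Finset.mem_sdiff.2 ⟨h, hv⟩)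
    · have ht : t ≤ (S ∩ B).card := by
        apply hlb _ Finset.inter_subset_right
        intro u v hu hv huv
        rcases hS huv with h | h
        · exact Or.inl (Finset.mem_inter.2 ⟨h, hu⟩)
        · exact Or.inr (Finset.mem_inter.2 ⟨h, hv⟩)
      have : (S \ B).card + (S ∩ B).card = S.card :=
        Finset.card_sdiff_add_card_inter S B
      omega
  · rintro ⟨S, hSB, hS, hcard⟩
    obtain ⟨X, hXB, hXcard, hXcov⟩ := hX
    refine ⟨S ∪ X, ?_, ?_⟩
    · intro u v huv
      by_cases hu : u ∈ B
      · rcases hXcov u v huv (Or.inl hu) with h | h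
        · exact Or.inl (Finset.mem_union_right _ h)
        · exact Or.inr (Finset.mem_union_right _ h)
      by_cases hv : v ∈ B
      · rcases hXcov u v huv (Or.inr hv) with h | h
        · exact Or.inl (Finset.mem_union_right _ h)
        · exact Or.inr (Finset.mem_union_right _ h)
      rcases hS u v huv hu hv with h | h
      · exact Or.inl (Finset.mem_union_left _ h)
      · exact Or.inr (Finset.mem_union_left _ h)
    · calc (S ∪ X).card ≤ S.card + X.card := Finset.card_union_le _ _
        _ ≤ k + t := by omega
end

section
/- Let G be a finite simple graph and let v be a vertex of degree exactly 3 in G. Then there exists a minimum vertex cover of G that contains either all three neighbors of v, or at most one neighbor of v. -/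
/-- If `v` is a vertex of degree exactly `3` in `G`, then there is a minimum vertex
cover of `G` that contains either all three neighbors of `v` or at most one neighbor
of `v`. -/
theorem minimum_vertexCover_degree_three_neighbors {V : Type*} [Fintype V]
    [DecidableEq V] (G : SimpleGraph V) [DecidableRel G.Adj] (v : V)
    (hdeg : G.degree v = 3) :
    ∃ S : Finset V, IsVertexCover G S ∧
      (∀ S' : Finset V, IsVertexCover G S' → S.card ≤ S'.card) ∧
      (G.neighborFinset v ⊆ S ∨ (S ∩ G.neighborFinset v).card ≤ 1) := by
  classical
  set P : Set ℕ := {n | ∃ S : Finset V, IsVertexCover G S ∧ S.card = n} with hP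
  have hne : P.Nonempty :=
    ⟨(Finset.univ : Finset V).card, Finset.univ,
      fun u w _ => Or.inl (Finset.mem_univ u), rfl⟩
  obtain ⟨S, hS, hScard⟩ := Nat.sInf_mem hne
  have hmin : ∀ S' : Finset V, IsVertexCover G S' → S.card ≤ S'.card := by
    intro S' hS'
    rw [hScard]
    exact Nat.sInf_le ⟨S', hS', rfl⟩
  set N := G.neighborFinset v with hN
  have hNcard : N.card = 3 := by
    rw [hN, SimpleGraph.card_neighborFinset_eq_degree, hdeg]
  have hsub : S ∩ N ⊆ N := Finset.inter_subset_right
  have hle3 : (S ∩ N).card ≤ 3 := hNcard ▸ Finset.card_le_card hsub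
  rcases Nat.lt_or_ge (S ∩ N).card 2 with h1 | h2
  · exact ⟨S, hS, hmin, Or.inr (Nat.lt_succ_iff.mp h1)⟩
  rcases Nat.lt_or_ge (S ∩ N).card 3 with h2' | h3
  swap
  · -- card 3 : N ⊆ S
    have : S ∩ N = N := Finset.eq_of_subset_of_card_le hsub (hNcard ▸ h3)
    exact ⟨S, hS, hmin, Or.inl (fun x hx => Finset.mem_of_mem_inter_left (this ▸ hx))⟩
  -- card exactly 2
  have hcard2 : (S ∩ N).card = 2 := le_antisymm (Nat.lt_succ_iff.mp h2') h2
  have hdiff : (N \ S).card = 1 := by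
    have := Finset.card_sdiff_of_subset (Finset.inter_subset_right : S ∩ N ⊆ N)
    have hrw : N \ (S ∩ N) = N \ S := by
      ext x; simp [Finset.mem_sdiff, Finset.mem_inter]
    rw [hrw] at this
    rw [this, hcard2, hNcard]
  obtain ⟨w, hw⟩ := Finset.card_eq_one.mp hdiff
  have hwN : w ∈ N := by
    have : w ∈ N \ S := hw ▸ Finset.mem_singleton_self w
    exact (Finset.mem_sdiff.mp this).1
  have hwS : w ∉ S := by
    have : w ∈ N \ S := hw ▸ Finset.mem_singleton_self w
    exact (Finset.mem_sdiff.mp this).2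
  have hNS : ∀ x ∈ N, x ≠ w → x ∈ S := by
    intro x hx hxw
    by_contra hxS
    have : x ∈ N \ S := Finset.mem_sdiff.mpr ⟨hx, hxS⟩
    rw [hw, Finset.mem_singleton] at this
    exact hxw this
  have hvS : v ∈ S := by
    have hadj : G.Adj v w := (SimpleGraph.mem_neighborFinset G v w).mp hwN
    rcases hS hadj with h | h
    · exact h
    · exact absurd h hwS
  have hvN : v ∉ N := by
    rw [hN, SimpleGraph.mem_neighborFinset]
    exact G.irrefl
  set T := insert w (S.erase v) with hT
  have hNsubT : N ⊆ T := by
    intro x hx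
    by_cases hxw : x = w
    · rw [hxw]; exact Finset.mem_insert_self _ _
    · refine Finset.mem_insert_of_mem (Finset.mem_erase.mpr ⟨?_, hNS x hx hxw⟩)
      intro h; rw [h] at hx; exact hvN hx
  have hTcover : IsVertexCover G T := by
    intro a b hab
    rcases hS hab with h | h
    · by_cases hav : a = v
      · subst hav
        right
        apply hNsubT
        rw [hN, SimpleGraph.mem_neighborFinset]
        exact hab
      · exact Or.inl (Finset.mem_insert_of_mem (Finset.mem_erase.mpr ⟨hav, h⟩))
    · by_cases hbv : b = v
      · subst hbv
        left
        apply hNsubT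
        rw [hN, SimpleGraph.mem_neighborFinset]
        exact hab.symm
      · exact Or.inr (Finset.mem_insert_of_mem (Finset.mem_erase.mpr ⟨hbv, h⟩))
  have hTcard : T.card ≤ S.card := by
    calc T.card ≤ (S.erase v).card + 1 := Finset.card_insert_le _ _
    _ = (S.card - 1) + 1 := by rw [Finset.card_erase_of_mem hvS]
    _ = S.card := Nat.succ_pred_eq_of_pos (Finset.card_pos.mpr ⟨v, hvS⟩)
  exact ⟨T, hTcover, fun S' hS' => le_trans hTcard (hmin S' hS'), Or.inl hNsubT⟩
end

section
/- Let G be a finite simple graph and let p and q be two distinct non-adjacent vertices of G such that p has at most one neighbor that is not a neighbor of q, and q has at most one neighbor that is not a neighbor of p. Then there exists a minimum vertex cover of G that contains both p and q, or contains neither p nor q. -/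
lemma aux_swap {V : Type*} [Fintype V] [DecidableEq V]
    (G : SimpleGraph V) (p q : V) (hnadj : ¬ G.Adj p q)
    (hp : {x : V | G.Adj p x ∧ ¬ G.Adj q x}.Subsingleton)
    (S : Finset V) (hS : IsVertexCover G S)
    (hmin : ∀ S' : Finset V, IsVertexCover G S' → S.card ≤ S'.card)
    (hpS : p ∈ S) (hqS : q ∉ S) :
    ∃ T : Finset V, IsVertexCover G T ∧
      (∀ S' : Finset V, IsVertexCover G S' → T.card ≤ S'.card) ∧ p ∉ T ∧ q ∉ T := by
  classical
  have hnq : ∀ x, G.Adj q x → x ∈ S := by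
    intro x hx
    rcases hS hx with h | h
    · exact absurd h hqS
    · exact h
  by_cases hex : ∃ a, G.Adj p a ∧ ¬ G.Adj q a
  · obtain ⟨a, hpa, hqa⟩ := hex
    have hap : a ≠ p := fun h => G.loopless.irrefl p (h ▸ hpa)
    have haq : a ≠ q := fun h => hnadj (h ▸ hpa)
    refine ⟨insert a (S.erase p), ?_, ?_, ?_, ?_⟩
    · intro u v huv
      by_cases hu : u = p
      · have huv' : G.Adj p v := hu ▸ huv
        have hv : v ≠ p := fun h => G.loopless.irrefl p (h ▸ huv')
        by_cases hqv : G.Adj q v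
        · exact Or.inr (Finset.mem_insert_of_mem (Finset.mem_erase.2 ⟨hv, hnq v hqv⟩))
        · have : v = a := hp ⟨huv', hqv⟩ ⟨hpa, hqa⟩
          exact Or.inr (Finset.mem_insert.2 (Or.inl this))
      · by_cases hv : v = p
        · have huv' : G.Adj p u := hv ▸ huv.symm
          by_cases hqu : G.Adj q u
          · exact Or.inl (Finset.mem_insert_of_mem (Finset.mem_erase.2 ⟨hu, hnq u hqu⟩))
          · have : u = a := hp ⟨huv', hqu⟩ ⟨hpa, hqa⟩
            exact Or.inl (Finset.mem_insert.2 (Or.inl this))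
        · rcases hS huv with h | h
          · exact Or.inl (Finset.mem_insert_of_mem (Finset.mem_erase.2 ⟨hu, h⟩))
          · exact Or.inr (Finset.mem_insert_of_mem (Finset.mem_erase.2 ⟨hv, h⟩))
    · intro S' hS'
      calc (insert a (S.erase p)).card ≤ (S.erase p).card + 1 := Finset.card_insert_le _ _
        _ = S.card := by
              have hpos : 0 < S.card := Finset.card_pos.2 ⟨p, hpS⟩
              rw [Finset.card_erase_of_mem hpS]; omega
        _ ≤ S'.card := hmin S' hS'
    · simp [hap.symm, Finset.mem_erase]
    · simp [haq.symm, Finset.mem_erase, hqS]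
  · push_neg at hex
    exfalso
    have hcover : IsVertexCover G (S.erase p) := by
      intro u v huv
      by_cases hu : u = p
      · have huv' : G.Adj p v := hu ▸ huv
        have hv : v ≠ p := fun h => G.loopless.irrefl p (h ▸ huv')
        exact Or.inr (Finset.mem_erase.2 ⟨hv, hnq v (hex v huv')⟩)
      · by_cases hv : v = p
        · have huv' : G.Adj p u := hv ▸ huv.symm
          exact Or.inl (Finset.mem_erase.2 ⟨hu, hnq u (hex u huv')⟩)
        · rcases hS huv with h | h
          · exact Or.inl (Finset.mem_erase.2 ⟨hu, h⟩)
          · exact Or.inr (Finset.mem_erase.2 ⟨hv, h⟩)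
    have := hmin _ hcover
    have := Finset.card_erase_of_mem hpS
    have : 0 < S.card := Finset.card_pos.2 ⟨p, hpS⟩
    omega

/-- Let `p` and `q` be distinct non-adjacent vertices of `G` such that `p` has at most
one neighbor that is not a neighbor of `q`, and `q` has at most one neighbor that is
not a neighbor of `p`. Then there is a minimum vertex cover of `G` containing both `p`
and `q`, or containing neither. -/
theorem minimum_vertexCover_both_or_neither {V : Type*} [Fintype V] [DecidableEq V]
    (G : SimpleGraph V) (p q : V) (hpq : p ≠ q) (hnadj : ¬ G.Adj p q)
    (hp : {x : V | G.Adj p x ∧ ¬ G.Adj q x}.Subsingleton)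
    (hq : {x : V | G.Adj q x ∧ ¬ G.Adj p x}.Subsingleton) :
    ∃ S : Finset V, IsVertexCover G S ∧
      (∀ S' : Finset V, IsVertexCover G S' → S.card ≤ S'.card) ∧
      ((p ∈ S ∧ q ∈ S) ∨ (p ∉ S ∧ q ∉ S)) := by
  classical
  have hex : ∃ n, ∃ S : Finset V, IsVertexCover G S ∧ S.card = n :=
    ⟨_, Finset.univ, fun u v _ => Or.inl (Finset.mem_univ u), rfl⟩
  obtain ⟨S, hS, hcard⟩ := Nat.find_spec hex
  have hmin : ∀ S' : Finset V, IsVertexCover G S' → S.card ≤ S'.card := by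
    intro S' hS'
    rw [hcard]
    exact Nat.find_le ⟨S', hS', rfl⟩
  by_cases hpS : p ∈ S <;> by_cases hqS : q ∈ S
  · exact ⟨S, hS, hmin, Or.inl ⟨hpS, hqS⟩⟩
  · obtain ⟨T, hT, hTmin, hpT, hqT⟩ := aux_swap G p q hnadj hp S hS hmin hpS hqS
    exact ⟨T, hT, hTmin, Or.inr ⟨hpT, hqT⟩⟩
  · obtain ⟨T, hT, hTmin, hqT, hpT⟩ :=
      aux_swap G q p (fun h => hnadj h.symm) hq S hS hmin hqS hpS
    exact ⟨T, hT, hTmin, Or.inr ⟨hpT, hqT⟩⟩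
  · exact ⟨S, hS, hmin, Or.inr ⟨hpS, hqS⟩⟩
end
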